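/- Fix d ≥ 1 and define L₀ : ℝ^d → ℝ̄ by L₀(x) = sup_{y ∈ ℝ^d} ( ⟨x,y⟩ − max_{l ∈ {0,1,…,d}} ( ‖y‖_(l) − l ) ). Then for every x ∈ ℝ^d, L₀(x) equals the minimum of Σ_{l=1}^{d} l · ‖x^{(l)}‖^sp_(l) over all d-tuples (x^{(1)},…,x^{(d)}) of vectors of ℝ^d satisfying Σ_{l=1}^{d} ‖x^{(l)}‖^sp_(l) ≤ 1 and Σ_{l=1}^{d} x^{(l)} = x (the minimum being +∞ when no such tuple exists, and attained otherwise). -/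

import Mathlib

noncomputable section

variable {d : ℕ}

/-- The projection `x_K` of `x` onto the coordinates in `K`
(the components outside `K` vanish). -/
def restr (K : Finset (Fin d)) (x : EuclideanSpace ℝ (Fin d)) : EuclideanSpace ℝ (Fin d) :=
  WithLp.toLp 2 (fun i => if i ∈ K then x i else 0)

/-- The 2-k-symmetric gauge norm `‖y‖_(k) = sup {‖y_K‖ : |K| ≤ k}`
(equal to `0` for `k = 0`, by the convention `‖·‖_(0) = 0`). -/
def gaugeNorm (k : ℕ) (y : EuclideanSpace ℝ (Fin d)) : ℝ :=
  ⨆ K : {K : Finset (Fin d) // K.card ≤ k}, ‖restr (K : Finset (Fin d)) y‖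

/-- The ℓ₀ pseudonorm: the number of nonzero components. -/
def l0 (x : EuclideanSpace ℝ (Fin d)) : ℕ :=
  (Finset.univ.filter fun i => x i ≠ 0).card

open Classical in
/-- The Capra coupling `¢(x,y) = ⟨x,y⟩ / ‖x‖` for `x ≠ 0`, and `¢(0,y) = 0`. -/
def capra (x y : EuclideanSpace ℝ (Fin d)) : ℝ :=
  if x = 0 then 0 else (inner ℝ x y : ℝ) / ‖x‖

/-- The Capra conjugate of ℓ₀: `y ↦ max_{0 ≤ l ≤ d} (‖y‖_(l) − l)`. -/
def capraConjL0 (y : EuclideanSpace ℝ (Fin d)) : ℝ :=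
  ⨆ l : Fin (d + 1), (gaugeNorm (l : ℕ) y - ((l : ℕ) : ℝ))

/-- `L₀(x) = sup_y (⟨x,y⟩ − max_{0 ≤ l ≤ d}(‖y‖_(l) − l))`, with values in `ℝ̄ = EReal`. -/
def L0 (x : EuclideanSpace ℝ (Fin d)) : EReal :=
  ⨆ y : EuclideanSpace ℝ (Fin d), (((inner ℝ x y : ℝ) - capraConjL0 y : ℝ) : EReal)

/-- The k-support norm: the dual norm of the 2-k-symmetric gauge norm,
`‖y‖^sp_(k) = sup {⟨x,y⟩ : ‖x‖_(k) ≤ 1}`. -/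
def suppNorm (k : ℕ) (y : EuclideanSpace ℝ (Fin d)) : ℝ :=
  sSup {c : ℝ | ∃ x : EuclideanSpace ℝ (Fin d), gaugeNorm k x ≤ 1 ∧ c = (inner ℝ x y : ℝ)}

/-- The unit ball of the k-support norm, with the convention `B^sp_(0) = {0}`. -/
def Bsp (d k : ℕ) : Set (EuclideanSpace ℝ (Fin d)) :=
  if k = 0 then {0} else {y | suppNorm k y ≤ 1}

/-- The degenerate unit sphere `S_K = {x : x_{−K} = 0 and ‖x_K‖ = 1}`. -/
def sphK (K : Finset (Fin d)) : Set (EuclideanSpace ℝ (Fin d)) :=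
  {x | (∀ i, i ∉ K → x i = 0) ∧ ‖restr K x‖ = 1}

/-- The degenerate unit ball `B_K = {x : x_{−K} = 0 and ‖x_K‖ ≤ 1}`. -/
def ballK (K : Finset (Fin d)) : Set (EuclideanSpace ℝ (Fin d)) :=
  {x | (∀ i, i ∉ K → x i = 0) ∧ ‖restr K x‖ ≤ 1}

/-- A tuple `(x^{(1)},…,x^{(d)})` (indexed here by `l : Fin d`, with `t l = x^{(l+1)}`)
is feasible for `x` if `Σ_{l=1}^{d} ‖x^{(l)}‖^sp_(l) ≤ 1` and `Σ_{l=1}^{d} x^{(l)} = x`. -/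
def Feasible (d : ℕ) (x : EuclideanSpace ℝ (Fin d))
    (t : Fin d → EuclideanSpace ℝ (Fin d)) : Prop :=
  (∑ l : Fin d, suppNorm ((l : ℕ) + 1) (t l)) ≤ 1 ∧ (∑ l : Fin d, t l) = x

/-- The objective value `Σ_{l=1}^{d} l · ‖x^{(l)}‖^sp_(l)` of a tuple. -/
def tupleVal (d : ℕ) (t : Fin d → EuclideanSpace ℝ (Fin d)) : ℝ :=
  ∑ l : Fin d, (((l : ℕ) + 1 : ℝ)) * suppNorm ((l : ℕ) + 1) (t l)

-- basics about restr
lemma restr_apply (K : Finset (Fin d)) (x : EuclideanSpace ℝ (Fin d)) (i : Fin d) :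
    restr K x i = if i ∈ K then x i else 0 := rfl

lemma inner_restr_right (K : Finset (Fin d)) (x y : EuclideanSpace ℝ (Fin d)) :
    (inner ℝ x (restr K y) : ℝ) = ∑ i ∈ K, x i * y i := by
  rw [PiLp.inner_apply]
  rw [← Finset.sum_subset (Finset.subset_univ K)]
  · apply Finset.sum_congr rfl
    intro i hi
    simp [restr_apply, hi, RCLike.inner_apply, conj_trivial, mul_comm]
  · intro i _ hi
    simp [restr_apply, hi]

lemma norm_restr_sq (K : Finset (Fin d)) (y : EuclideanSpace ℝ (Fin d)) :
    ‖restr K y‖ ^ 2 = ∑ i ∈ K, y i ^ 2 := by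
  rw [← real_inner_self_eq_norm_sq, PiLp.inner_apply]
  rw [← Finset.sum_subset (Finset.subset_univ K)]
  · apply Finset.sum_congr rfl
    intro i hi
    simp [restr_apply, hi]
  · intro i _ hi
    simp [restr_apply, hi]

lemma norm_restr_le (K : Finset (Fin d)) (y : EuclideanSpace ℝ (Fin d)) :
    ‖restr K y‖ ≤ ‖y‖ := by
  have h1 : ‖restr K y‖ ^ 2 ≤ ‖y‖ ^ 2 := by
    rw [norm_restr_sq, ← real_inner_self_eq_norm_sq, PiLp.inner_apply]
    simp only [RCLike.inner_apply, conj_trivial]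
    calc ∑ i ∈ K, y i ^ 2 ≤ ∑ i : Fin d, y i ^ 2 := by
          apply Finset.sum_le_sum_of_subset_of_nonneg (Finset.subset_univ K)
          intro i _ _; positivity
      _ = ∑ i : Fin d, y i * y i := by apply Finset.sum_congr rfl; intro i _; ring
  exact (pow_le_pow_iff_left₀ (norm_nonneg _) (norm_nonneg _) two_ne_zero).mp h1

lemma restr_smul (K : Finset (Fin d)) (c : ℝ) (y : EuclideanSpace ℝ (Fin d)) :
    restr K (c • y) = c • restr K y := by
  ext i
  simp only [restr_apply, PiLp.smul_apply, smul_eq_mul]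
  split <;> simp

instance gaugeIdx_nonempty (k : ℕ) : Nonempty {K : Finset (Fin d) // K.card ≤ k} :=
  ⟨⟨∅, by simp⟩⟩

lemma gauge_bdd (k : ℕ) (y : EuclideanSpace ℝ (Fin d)) :
    BddAbove (Set.range fun K : {K : Finset (Fin d) // K.card ≤ k} =>
      ‖restr (K : Finset (Fin d)) y‖) :=
  Set.Finite.bddAbove (Set.finite_range _)

lemma le_gaugeNorm {k : ℕ} (K : Finset (Fin d)) (hK : K.card ≤ k)
    (y : EuclideanSpace ℝ (Fin d)) : ‖restr K y‖ ≤ gaugeNorm k y :=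
  le_ciSup (gauge_bdd k y) (⟨K, hK⟩ : {K : Finset (Fin d) // K.card ≤ k})

lemma gaugeNorm_le {k : ℕ} {c : ℝ} (y : EuclideanSpace ℝ (Fin d))
    (h : ∀ K : Finset (Fin d), K.card ≤ k → ‖restr K y‖ ≤ c) : gaugeNorm k y ≤ c :=
  ciSup_le fun K => h K K.2

lemma gaugeNorm_nonneg (k : ℕ) (y : EuclideanSpace ℝ (Fin d)) : 0 ≤ gaugeNorm k y :=
  le_trans (norm_nonneg _) (le_gaugeNorm ∅ (by simp) y)

lemma gaugeNorm_le_norm (k : ℕ) (y : EuclideanSpace ℝ (Fin d)) : gaugeNorm k y ≤ ‖y‖ :=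
  gaugeNorm_le y fun K _ => norm_restr_le K y

set_option maxHeartbeats 2000000 in
lemma gaugeNorm_exists (k : ℕ) (y : EuclideanSpace ℝ (Fin d)) :
    ∃ K : Finset (Fin d), K.card ≤ k ∧ gaugeNorm k y = ‖restr K y‖ := by
  obtain ⟨⟨K, hKc⟩, -, hK⟩ := Finset.exists_max_image (Finset.univ : Finset {K : Finset (Fin d) // K.card ≤ k})
    (fun K => ‖restr (K : Finset (Fin d)) y‖) ⟨⟨∅, by simp⟩, Finset.mem_univ _⟩
  exact ⟨K, hKc, le_antisymm (ciSup_le fun L => hK L (Finset.mem_univ _)) (le_gaugeNorm K hKc y)⟩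

lemma gaugeNorm_zero_vec (k : ℕ) : gaugeNorm k (0 : EuclideanSpace ℝ (Fin d)) = 0 := by
  refine le_antisymm (gaugeNorm_le _ fun K _ => ?_) (gaugeNorm_nonneg _ _)
  have : restr K (0 : EuclideanSpace ℝ (Fin d)) = 0 := by
    ext i; simp [restr_apply]
  simp [this]

lemma abs_coord_le_gaugeNorm {k : ℕ} (hk : 1 ≤ k) (y : EuclideanSpace ℝ (Fin d)) (i : Fin d) :
    |y i| ≤ gaugeNorm k y := by
  refine le_trans ?_ (le_gaugeNorm {i} (by simpa) y)
  have : ‖restr {i} y‖ ^ 2 = (y i) ^ 2 := by rw [norm_restr_sq]; simp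
  have h2 : |y i| ^ 2 ≤ ‖restr {i} y‖ ^ 2 := by rw [this, sq_abs]
  exact (pow_le_pow_iff_left₀ (abs_nonneg _) (norm_nonneg _) two_ne_zero).mp h2

lemma gaugeNorm_eq_zero {k : ℕ} (hk : 1 ≤ k) {y : EuclideanSpace ℝ (Fin d)}
    (h : gaugeNorm k y = 0) : y = 0 := by
  ext i
  have := abs_coord_le_gaugeNorm hk y i
  rw [h] at this
  have : |y i| = 0 := le_antisymm this (abs_nonneg _)
  simpa using this

lemma gaugeNorm_smul (k : ℕ) (c : ℝ) (y : EuclideanSpace ℝ (Fin d)) :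
    gaugeNorm k (c • y) = |c| * gaugeNorm k y := by
  unfold gaugeNorm
  have h : ∀ K : {K : Finset (Fin d) // K.card ≤ k},
      ‖restr (K : Finset (Fin d)) (c • y)‖ = |c| * ‖restr (K : Finset (Fin d)) y‖ := by
    intro K; rw [restr_smul, norm_smul, Real.norm_eq_abs]
  simp_rw [h]
  rcases eq_or_lt_of_le (abs_nonneg c) with hc | hc
  · simp [← hc]
  · rw [Real.mul_iSup_of_nonneg (abs_nonneg c)]

lemma norm_le_sqrt_d_of_gauge_le_one {k : ℕ} (hk : 1 ≤ k) {z : EuclideanSpace ℝ (Fin d)}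
    (h : gaugeNorm k z ≤ 1) : ‖z‖ ≤ Real.sqrt d := by
  have h2 : ‖z‖ ^ 2 ≤ (d : ℝ) := by
    rw [← real_inner_self_eq_norm_sq, PiLp.inner_apply]
    simp only [RCLike.inner_apply, conj_trivial]
    calc ∑ i : Fin d, z i * z i = ∑ i : Fin d, |z i| ^ 2 := by
          apply Finset.sum_congr rfl; intro i _; rw [sq_abs]; ring
      _ ≤ ∑ _i : Fin d, (1 : ℝ) := by
          apply Finset.sum_le_sum
          intro i _
          have := (abs_coord_le_gaugeNorm hk z i).trans h
          nlinarith [abs_nonneg (z i)]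
      _ = d := by simp
  calc ‖z‖ = Real.sqrt (‖z‖ ^ 2) := by rw [Real.sqrt_sq (norm_nonneg _)]
    _ ≤ Real.sqrt d := Real.sqrt_le_sqrt h2


lemma suppSet_nonempty (k : ℕ) (y : EuclideanSpace ℝ (Fin d)) :
    {c : ℝ | ∃ x : EuclideanSpace ℝ (Fin d), gaugeNorm k x ≤ 1 ∧ c = (inner ℝ x y : ℝ)}.Nonempty :=
  ⟨0, 0, by rw [gaugeNorm_zero_vec]; norm_num, by simp⟩

lemma suppSet_bddAbove {k : ℕ} (hk : 1 ≤ k) (y : EuclideanSpace ℝ (Fin d)) :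
    BddAbove {c : ℝ | ∃ x : EuclideanSpace ℝ (Fin d), gaugeNorm k x ≤ 1 ∧ c = (inner ℝ x y : ℝ)} := by
  refine ⟨Real.sqrt d * ‖y‖, ?_⟩
  rintro c ⟨z, hz, rfl⟩
  calc (inner ℝ z y : ℝ) ≤ ‖z‖ * ‖y‖ := real_inner_le_norm z y
    _ ≤ Real.sqrt d * ‖y‖ :=
      mul_le_mul_of_nonneg_right (norm_le_sqrt_d_of_gauge_le_one hk hz) (norm_nonneg _)

lemma inner_le_suppNorm {k : ℕ} (hk : 1 ≤ k) {z : EuclideanSpace ℝ (Fin d)}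
    (hz : gaugeNorm k z ≤ 1) (y : EuclideanSpace ℝ (Fin d)) :
    (inner ℝ z y : ℝ) ≤ suppNorm k y :=
  le_csSup (suppSet_bddAbove hk y) ⟨z, hz, rfl⟩

lemma suppNorm_nonneg {k : ℕ} (hk : 1 ≤ k) (y : EuclideanSpace ℝ (Fin d)) :
    0 ≤ suppNorm k y := by
  have := inner_le_suppNorm hk (z := 0) (by rw [gaugeNorm_zero_vec]; norm_num) y
  simpa using this

lemma suppNorm_le {k : ℕ} {c : ℝ} (y : EuclideanSpace ℝ (Fin d))
    (h : ∀ z : EuclideanSpace ℝ (Fin d), gaugeNorm k z ≤ 1 → (inner ℝ z y : ℝ) ≤ c) :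
    suppNorm k y ≤ c := by
  apply csSup_le (suppSet_nonempty k y)
  rintro b ⟨z, hz, rfl⟩
  exact h z hz

lemma suppNorm_zero (k : ℕ) : suppNorm k (0 : EuclideanSpace ℝ (Fin d)) = 0 := by
  unfold suppNorm
  have : {c : ℝ | ∃ x : EuclideanSpace ℝ (Fin d), gaugeNorm k x ≤ 1 ∧ c = (inner ℝ x 0 : ℝ)}
      = {0} := by
    ext c
    constructor
    · rintro ⟨z, _, rfl⟩; simp
    · rintro rfl; exact ⟨0, by rw [gaugeNorm_zero_vec]; norm_num, by simp⟩
  rw [this, csSup_singleton]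

/-- The fundamental duality inequality. -/
lemma inner_le_gauge_mul_supp {k : ℕ} (hk : 1 ≤ k) (z y : EuclideanSpace ℝ (Fin d)) :
    (inner ℝ z y : ℝ) ≤ gaugeNorm k z * suppNorm k y := by
  rcases eq_or_lt_of_le (gaugeNorm_nonneg k z) with h0 | h0
  · have hz : z = 0 := gaugeNorm_eq_zero hk h0.symm
    rw [hz]
    rw [gaugeNorm_zero_vec, zero_mul]
    simp
  · have h1 : gaugeNorm k ((gaugeNorm k z)⁻¹ • z) ≤ 1 := by
      rw [gaugeNorm_smul, abs_of_pos (inv_pos.mpr h0), inv_mul_cancel₀ (ne_of_gt h0)]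
    have h2 := inner_le_suppNorm hk h1 y
    rw [real_inner_smul_left] at h2
    calc (inner ℝ z y : ℝ) = gaugeNorm k z * ((gaugeNorm k z)⁻¹ * (inner ℝ z y : ℝ)) := by
          field_simp
      _ ≤ gaugeNorm k z * suppNorm k y := mul_le_mul_of_nonneg_left h2 (le_of_lt h0)

lemma norm_le_suppNorm {k : ℕ} (hk : 1 ≤ k) (y : EuclideanSpace ℝ (Fin d)) :
    ‖y‖ ≤ suppNorm k y := by
  rcases eq_or_ne y 0 with rfl | hy
  · simp [suppNorm_zero]
  · have h1 : gaugeNorm k (‖y‖⁻¹ • y) ≤ 1 := by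
      rw [gaugeNorm_smul, abs_of_pos (inv_pos.mpr (norm_pos_iff.mpr hy))]
      calc ‖y‖⁻¹ * gaugeNorm k y ≤ ‖y‖⁻¹ * ‖y‖ :=
            mul_le_mul_of_nonneg_left (gaugeNorm_le_norm k y) (inv_nonneg.mpr (norm_nonneg _))
        _ = 1 := inv_mul_cancel₀ (norm_ne_zero_iff.mpr hy)
    have h2 := inner_le_suppNorm hk h1 y
    rw [real_inner_smul_left, real_inner_self_eq_norm_sq] at h2
    have hy' : (0:ℝ) < ‖y‖ := norm_pos_iff.mpr hy
    calc ‖y‖ = ‖y‖⁻¹ * ‖y‖ ^ 2 := by field_simp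
      _ ≤ suppNorm k y := h2

lemma suppNorm_add_le {k : ℕ} (hk : 1 ≤ k) (u v : EuclideanSpace ℝ (Fin d)) :
    suppNorm k (u + v) ≤ suppNorm k u + suppNorm k v := by
  apply suppNorm_le
  intro z hz
  rw [inner_add_right]
  exact add_le_add (inner_le_suppNorm hk hz u) (inner_le_suppNorm hk hz v)

lemma suppNorm_smul {k : ℕ} (hk : 1 ≤ k) (c : ℝ) (y : EuclideanSpace ℝ (Fin d)) :
    suppNorm k (c • y) = |c| * suppNorm k y := by
  have key : ∀ (a : ℝ) (w : EuclideanSpace ℝ (Fin d)), 0 ≤ a →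
      suppNorm k (a • w) ≤ a * suppNorm k w := by
    intro a w ha
    apply suppNorm_le
    intro z hz
    rw [real_inner_smul_right]
    exact mul_le_mul_of_nonneg_left (inner_le_suppNorm hk hz w) ha
  have neg : ∀ w : EuclideanSpace ℝ (Fin d), suppNorm k (-w) = suppNorm k w := by
    have h1 : ∀ w : EuclideanSpace ℝ (Fin d), suppNorm k (-w) ≤ suppNorm k w := by
      intro w
      apply suppNorm_le
      intro z hz
      rw [inner_neg_right]
      have hz' : gaugeNorm k (-z) ≤ 1 := by
        have : (-z : EuclideanSpace ℝ (Fin d)) = (-1 : ℝ) • z := by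
          ext i; simp
        rw [this, gaugeNorm_smul]; simpa
      have := inner_le_suppNorm hk hz' w
      linarith [this, (by rw [inner_neg_left] : (inner ℝ (-z) w : ℝ) = -(inner ℝ z w : ℝ))]
    intro w
    refine le_antisymm (h1 w) ?_
    have := h1 (-w)
    rwa [neg_neg] at this
  rcases le_or_gt 0 c with hc | hc
  · rw [abs_of_nonneg hc]
    refine le_antisymm (key c y hc) ?_
    rcases eq_or_lt_of_le hc with rfl | hc'
    · simp [suppNorm_zero]
    · have := key c⁻¹ (c • y) (le_of_lt (inv_pos.mpr hc'))
      rw [smul_smul, inv_mul_cancel₀ (ne_of_gt hc'), one_smul] at this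
      calc c * suppNorm k y ≤ c * (c⁻¹ * suppNorm k (c • y)) :=
            mul_le_mul_of_nonneg_left this (le_of_lt hc')
        _ = suppNorm k (c • y) := by field_simp
  · have h1 : c • y = -((-c) • y) := by ext i; simp
    rw [h1, neg, abs_of_neg hc]
    have h2 : (0:ℝ) ≤ -c := by linarith
    refine le_antisymm (key (-c) y h2) ?_
    rcases eq_or_lt_of_le h2 with h3 | h3
    · exfalso; linarith
    · have := key (-c)⁻¹ ((-c) • y) (le_of_lt (inv_pos.mpr h3))
      rw [smul_smul, inv_mul_cancel₀ (ne_of_gt h3), one_smul] at this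
      calc -c * suppNorm k y ≤ -c * ((-c)⁻¹ * suppNorm k ((-c) • y)) :=
            mul_le_mul_of_nonneg_left this (le_of_lt h3)
        _ = suppNorm k ((-c) • y) := by rw [← mul_assoc, mul_inv_cancel₀ (ne_of_gt h3), one_mul]

lemma suppNorm_sub_le {k : ℕ} (hk : 1 ≤ k) (a b : EuclideanSpace ℝ (Fin d)) :
    suppNorm k a - suppNorm k b ≤ Real.sqrt d * ‖a - b‖ := by
  have h1 : suppNorm k a ≤ suppNorm k b + Real.sqrt d * ‖a - b‖ := by
    apply suppNorm_le
    intro z hz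
    have : (inner ℝ z a : ℝ) = (inner ℝ z b : ℝ) + (inner ℝ z (a - b) : ℝ) := by
      rw [← inner_add_right]; norm_num
    rw [this]
    apply add_le_add (inner_le_suppNorm hk hz b)
    calc (inner ℝ z (a - b) : ℝ) ≤ ‖z‖ * ‖a - b‖ := real_inner_le_norm _ _
      _ ≤ Real.sqrt d * ‖a - b‖ :=
        mul_le_mul_of_nonneg_right (norm_le_sqrt_d_of_gauge_le_one hk hz) (norm_nonneg _)
  linarith

lemma suppNorm_continuous {k : ℕ} (hk : 1 ≤ k) :
    Continuous (suppNorm k : EuclideanSpace ℝ (Fin d) → ℝ) := by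
  rw [Metric.continuous_iff]
  intro a ε hε
  rcases le_or_gt (Real.sqrt d) 0 with hd0 | hd0
  · refine ⟨1, one_pos, fun b _ => ?_⟩
    have h1 := suppNorm_sub_le hk b a
    have h2 := suppNorm_sub_le hk a b
    have h3 : Real.sqrt d * ‖b - a‖ ≤ 0 := mul_nonpos_of_nonpos_of_nonneg hd0 (norm_nonneg _)
    have h4 : Real.sqrt d * ‖a - b‖ ≤ 0 := mul_nonpos_of_nonpos_of_nonneg hd0 (norm_nonneg _)
    rw [Real.dist_eq, abs_lt]
    constructor <;> linarith
  · refine ⟨ε / Real.sqrt d, div_pos hε hd0, fun b hb => ?_⟩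
    have h1 := suppNorm_sub_le hk b a
    have h2 := suppNorm_sub_le hk a b
    have hba : ‖b - a‖ = dist b a := by rw [dist_eq_norm]
    have hab : ‖a - b‖ = dist b a := by rw [dist_comm, dist_eq_norm]
    rw [hba] at h1; rw [hab] at h2
    have h5 : Real.sqrt d * dist b a < ε := by
      have := (lt_div_iff₀ hd0).mp hb
      linarith [mul_comm (Real.sqrt d) (dist b a)]
    rw [Real.dist_eq, abs_lt]
    constructor <;> linarith

lemma gaugeNorm_top (z : EuclideanSpace ℝ (Fin d)) : gaugeNorm d z = ‖z‖ := by
  refine le_antisymm (gaugeNorm_le_norm d z) ?_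
  have h : restr Finset.univ z = z := by
    ext i; simp [restr_apply]
  have := le_gaugeNorm (k := d) (Finset.univ : Finset (Fin d)) (by simp) z
  rwa [h] at this

lemma suppNorm_top_le {z : EuclideanSpace ℝ (Fin d)} (hd : 1 ≤ d) (hz : ‖z‖ ≤ 1) :
    suppNorm d z ≤ 1 := by
  apply suppNorm_le
  intro w hw
  rw [gaugeNorm_top] at hw
  calc (inner ℝ w z : ℝ) ≤ ‖w‖ * ‖z‖ := real_inner_le_norm _ _
    _ ≤ 1 := by nlinarith [norm_nonneg w, norm_nonneg z]

/-- A unit vector supported on `K` with `|K| ≤ k` has k-support norm at most 1. -/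
lemma suppNorm_restr_unit {k : ℕ} (hk : 1 ≤ k) {K : Finset (Fin d)} (hK : K.card ≤ k)
    {v : EuclideanSpace ℝ (Fin d)} (hsupp : ∀ i, i ∉ K → v i = 0) (hv : ‖v‖ ≤ 1) :
    suppNorm k v ≤ 1 := by
  apply suppNorm_le
  intro z hz
  have h1 : (inner ℝ z v : ℝ) = (inner ℝ (restr K z) v : ℝ) := by
    rw [PiLp.inner_apply, PiLp.inner_apply]
    apply Finset.sum_congr rfl
    intro i _
    rcases Finset.decidableMem i K with h | h
    · simp [RCLike.inner_apply, conj_trivial, restr_apply, h, hsupp i h]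
    · simp [RCLike.inner_apply, conj_trivial, restr_apply, h]
  rw [h1]
  calc (inner ℝ (restr K z) v : ℝ) ≤ ‖restr K z‖ * ‖v‖ := real_inner_le_norm _ _
    _ ≤ gaugeNorm k z * 1 := by
        apply mul_le_mul (le_gaugeNorm K hK z) hv (norm_nonneg _) (gaugeNorm_nonneg _ _)
    _ ≤ 1 := by rw [mul_one]; exact hz



lemma capraConj_bdd (y : EuclideanSpace ℝ (Fin d)) :
    BddAbove (Set.range fun l : Fin (d + 1) => gaugeNorm (l : ℕ) y - ((l : ℕ) : ℝ)) :=
  Set.Finite.bddAbove (Set.finite_range _)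

lemma le_capraConj (y : EuclideanSpace ℝ (Fin d)) (l : Fin (d + 1)) :
    gaugeNorm (l : ℕ) y - ((l : ℕ) : ℝ) ≤ capraConjL0 y :=
  le_ciSup (capraConj_bdd y) l

lemma capraConj_le {c : ℝ} (y : EuclideanSpace ℝ (Fin d))
    (h : ∀ l : Fin (d + 1), gaugeNorm (l : ℕ) y - ((l : ℕ) : ℝ) ≤ c) : capraConjL0 y ≤ c :=
  ciSup_le h

lemma gaugeNorm_zero_k (y : EuclideanSpace ℝ (Fin d)) : gaugeNorm 0 y = 0 := by
  refine le_antisymm (gaugeNorm_le y fun K hK => ?_) (gaugeNorm_nonneg _ _)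
  have hK0 : K = ∅ := Finset.card_eq_zero.mp (Nat.le_zero.mp hK)
  subst hK0
  have : restr (∅ : Finset (Fin d)) y = 0 := by ext i; simp [restr_apply]
  simp [this]

lemma capraConj_nonneg (y : EuclideanSpace ℝ (Fin d)) : 0 ≤ capraConjL0 y := by
  have := le_capraConj y 0
  simpa [gaugeNorm_zero_k] using this

lemma capraConj_zero : capraConjL0 (0 : EuclideanSpace ℝ (Fin d)) = 0 := by
  refine le_antisymm (capraConj_le _ fun l => ?_) (capraConj_nonneg _)
  rw [gaugeNorm_zero_vec]
  simp

lemma capraConj_le_norm (y : EuclideanSpace ℝ (Fin d)) : capraConjL0 y ≤ ‖y‖ := by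
  apply capraConj_le
  intro l
  have h1 := gaugeNorm_le_norm (l : ℕ) y
  have h2 : (0:ℝ) ≤ ((l : ℕ) : ℝ) := Nat.cast_nonneg _
  linarith

lemma gauge_le_capraConj_add {l : Fin d} (y : EuclideanSpace ℝ (Fin d)) :
    gaugeNorm ((l : ℕ) + 1) y ≤ capraConjL0 y + ((l : ℕ) + 1 : ℝ) := by
  have hl : (l : ℕ) + 1 < d + 1 := by omega
  have := le_capraConj y ⟨(l : ℕ) + 1, hl⟩
  simp only [Fin.val_mk] at this
  push_cast at this ⊢
  linarith

lemma le_L0 (x y : EuclideanSpace ℝ (Fin d)) :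
    (((inner ℝ x y : ℝ) - capraConjL0 y : ℝ) : EReal) ≤ L0 x :=
  le_iSup (fun y => (((inner ℝ x y : ℝ) - capraConjL0 y : ℝ) : EReal)) y

lemma L0_nonneg (x : EuclideanSpace ℝ (Fin d)) : (0 : EReal) ≤ L0 x := by
  have := le_L0 x 0
  simp only [inner_zero_right, capraConj_zero] at this
  calc (0 : EReal) = (((0:ℝ) - 0 : ℝ) : EReal) := by norm_num
    _ ≤ L0 x := by
      refine le_trans (le_of_eq ?_) this
      norm_num



/-- Direction 1 core: real inequality. -/
lemma dir1_real (x y : EuclideanSpace ℝ (Fin d)) (t : Fin d → EuclideanSpace ℝ (Fin d))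
    (hsum : (∑ l : Fin d, suppNorm ((l : ℕ) + 1) (t l)) ≤ 1)
    (hx : (∑ l : Fin d, t l) = x) :
    (inner ℝ x y : ℝ) - capraConjL0 y ≤ tupleVal d t := by
  have hσ : ∀ l : Fin d, 0 ≤ suppNorm ((l : ℕ) + 1) (t l) := fun l =>
    suppNorm_nonneg (by omega) _
  have key : (inner ℝ x y : ℝ) ≤
      ∑ l : Fin d, suppNorm ((l : ℕ) + 1) (t l) * (capraConjL0 y + ((l : ℕ) + 1 : ℝ)) := by
    rw [← hx, sum_inner]
    apply Finset.sum_le_sum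
    intro l _
    calc (inner ℝ (t l) y : ℝ) ≤ gaugeNorm ((l : ℕ) + 1) y * suppNorm ((l : ℕ) + 1) (t l) := by
          rw [real_inner_comm]
          exact inner_le_gauge_mul_supp (by omega) y (t l)
      _ ≤ (capraConjL0 y + ((l : ℕ) + 1 : ℝ)) * suppNorm ((l : ℕ) + 1) (t l) :=
          mul_le_mul_of_nonneg_right (gauge_le_capraConj_add y) (hσ l)
      _ = suppNorm ((l : ℕ) + 1) (t l) * (capraConjL0 y + ((l : ℕ) + 1 : ℝ)) := mul_comm _ _
  have expand : ∑ l : Fin d, suppNorm ((l : ℕ) + 1) (t l) * (capraConjL0 y + ((l : ℕ) + 1 : ℝ))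
      = (∑ l : Fin d, suppNorm ((l : ℕ) + 1) (t l)) * capraConjL0 y + tupleVal d t := by
    rw [Finset.sum_mul, tupleVal, ← Finset.sum_add_distrib]
    apply Finset.sum_congr rfl
    intro l _
    ring
  rw [expand] at key
  have hg := capraConj_nonneg y
  nlinarith [key, hsum, hg]

lemma dir1 (x : EuclideanSpace ℝ (Fin d)) (t : Fin d → EuclideanSpace ℝ (Fin d))
    (ht : Feasible d x t) : L0 x ≤ ((tupleVal d t : ℝ) : EReal) := by
  apply iSup_le
  intro y
  exact_mod_cast EReal.coe_le_coe_iff.mpr (dir1_real x y t ht.1 ht.2)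

/-- Infeasibility when ‖x‖ > 1. -/
lemma no_feasible_of_norm_gt (x : EuclideanSpace ℝ (Fin d)) (hx : 1 < ‖x‖) :
    ¬ ∃ t, Feasible d x t := by
  rintro ⟨t, hsum, hxeq⟩
  have h1 : ‖x‖ ≤ ∑ l : Fin d, ‖t l‖ := by
    rw [← hxeq]
    exact norm_sum_le _ _
  have h2 : ∑ l : Fin d, ‖t l‖ ≤ ∑ l : Fin d, suppNorm ((l : ℕ) + 1) (t l) :=
    Finset.sum_le_sum fun l _ => norm_le_suppNorm (by omega) (t l)
  linarith

lemma L0_top_of_norm_gt (x : EuclideanSpace ℝ (Fin d)) (hx : 1 < ‖x‖) :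
    L0 x = ⊤ := by
  rw [L0, iSup_eq_top]
  intro b hb
  set c : ℝ := ‖x‖ * (‖x‖ - 1) with hc
  have hcpos : 0 < c := mul_pos (by linarith) (by linarith)
  -- find a real r with b < (r : EReal)
  obtain ⟨r, hr, -⟩ := EReal.exists_between_coe_real hb
  obtain ⟨n, hn⟩ := exists_nat_gt (r / c)
  refine ⟨(n : ℝ) • x, lt_of_lt_of_le hr ?_⟩
  rw [EReal.coe_le_coe_iff]
  have h1 : (inner ℝ x ((n:ℝ) • x) : ℝ) = n * ‖x‖ ^ 2 := by
    rw [real_inner_smul_right, real_inner_self_eq_norm_sq]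
  have h2 : capraConjL0 ((n:ℝ) • x) ≤ (n : ℝ) * ‖x‖ := by
    refine (capraConj_le_norm _).trans ?_
    rw [norm_smul]
    rw [Real.norm_eq_abs, abs_of_nonneg (by positivity : (0:ℝ) ≤ (n:ℝ))]
  have h3 : r < n * c := (div_lt_iff₀ hcpos).mp hn
  have h4 : (n:ℝ) * c = n * ‖x‖ ^ 2 - n * ‖x‖ := by rw [hc]; ring
  nlinarith [h2]

lemma suppNorm_nonneg' (l : Fin d) (v : EuclideanSpace ℝ (Fin d)) :
    0 ≤ suppNorm ((l : ℕ) + 1) v := suppNorm_nonneg (by omega) v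

lemma feasible_of_norm_le (hd : 1 ≤ d) (x : EuclideanSpace ℝ (Fin d)) (hx : ‖x‖ ≤ 1) :
    ∃ t, Feasible d x t := by
  have hd' : d - 1 < d := by omega
  set j : Fin d := ⟨d - 1, hd'⟩ with hj
  set t : Fin d → EuclideanSpace ℝ (Fin d) := fun l => if l = j then x else 0 with ht
  have hkey : ∀ l : Fin d, suppNorm ((l : ℕ) + 1) (t l) = if l = j then suppNorm d x else 0 := by
    intro l
    rcases eq_or_ne l j with rfl | hne
    · simp only [ht, if_pos rfl]
      congr 1
      show d - 1 + 1 = d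
      omega
    · simp [ht, hne, suppNorm_zero]
  refine ⟨t, ?_, ?_⟩
  · rw [Finset.sum_congr rfl fun l _ => hkey l, Finset.sum_ite_eq' Finset.univ j
      (fun _ => suppNorm d x)]
    simp only [Finset.mem_univ, if_pos]
    exact suppNorm_top_le hd hx
  · rw [ht]
    simp [Finset.sum_ite_eq' Finset.univ j (fun _ => x)]

lemma tupleVal_continuous : Continuous (tupleVal d) := by
  unfold tupleVal
  apply continuous_finset_sum
  intro l _
  exact (continuous_const.mul ((suppNorm_continuous (by omega)).comp (continuous_apply l)))

lemma feasible_isCompact (x : EuclideanSpace ℝ (Fin d)) :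
    IsCompact {t : Fin d → EuclideanSpace ℝ (Fin d) | Feasible d x t} := by
  apply Metric.isCompact_of_isClosed_isBounded
  · have h1 : IsClosed {t : Fin d → EuclideanSpace ℝ (Fin d) |
        (∑ l : Fin d, suppNorm ((l : ℕ) + 1) (t l)) ≤ 1} := by
      apply isClosed_le _ continuous_const
      apply continuous_finset_sum
      intro l _
      exact (suppNorm_continuous (by omega)).comp (continuous_apply l)
    have h2 : IsClosed {t : Fin d → EuclideanSpace ℝ (Fin d) | (∑ l : Fin d, t l) = x} := by
      have : Continuous fun t : Fin d → EuclideanSpace ℝ (Fin d) => ∑ l : Fin d, t l := by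
        apply continuous_finset_sum
        intro l _
        exact continuous_apply l
      exact isClosed_eq this continuous_const
    exact h1.inter h2
  · rw [Metric.isBounded_iff_subset_closedBall 0]
    refine ⟨1, fun t ht => ?_⟩
    rw [Metric.mem_closedBall, dist_pi_le_iff zero_le_one]
    intro l
    have h0 : dist (t l) ((0 : Fin d → EuclideanSpace ℝ (Fin d)) l) = ‖t l‖ := by
      simp [dist_eq_norm]
    rw [h0]
    have h1 : ‖t l‖ ≤ suppNorm ((l : ℕ) + 1) (t l) := norm_le_suppNorm (by omega) _
    have h2 : suppNorm ((l : ℕ) + 1) (t l) ≤ ∑ m : Fin d, suppNorm ((m : ℕ) + 1) (t m) :=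
      Finset.single_le_sum (fun m _ => suppNorm_nonneg' m (t m)) (Finset.mem_univ l)
    have h3 := ht.1
    calc ‖t l‖ ≤ _ := h1
      _ ≤ _ := h2
      _ ≤ 1 := h3

lemma exists_min_feasible (hd : 1 ≤ d) (x : EuclideanSpace ℝ (Fin d)) (hx : ‖x‖ ≤ 1) :
    ∃ t₀, Feasible d x t₀ ∧ ∀ t, Feasible d x t → tupleVal d t₀ ≤ tupleVal d t := by
  obtain ⟨t₀, ht₀, hmin⟩ := (feasible_isCompact x).exists_isMinOn
    (by obtain ⟨t, ht⟩ := feasible_of_norm_le hd x hx; exact ⟨t, ht⟩) (tupleVal_continuous).continuousOn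
  exact ⟨t₀, ht₀, fun t ht => hmin ht⟩

open Pointwise

variable (d) in
/-- The "epigraph" set used in the separation argument. -/
def Cset (x : EuclideanSpace ℝ (Fin d)) : Set (EuclideanSpace ℝ (Fin d) × ℝ) :=
  {p | ∃ t : Fin d → EuclideanSpace ℝ (Fin d),
    (∑ l : Fin d, suppNorm ((l : ℕ) + 1) (t l)) ≤ 1 ∧ (∑ l : Fin d, t l) = p.1 ∧
      tupleVal d t ≤ p.2}

lemma Cset_eq (x : EuclideanSpace ℝ (Fin d)) :
    Cset d x = ((fun t : Fin d → EuclideanSpace ℝ (Fin d) => ((∑ l : Fin d, t l), tupleVal d t))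
        '' {t | (∑ l : Fin d, suppNorm ((l : ℕ) + 1) (t l)) ≤ 1})
      +ᵥ ({p : EuclideanSpace ℝ (Fin d) × ℝ | p.1 = 0 ∧ 0 ≤ p.2}) := by
  ext p
  constructor
  · rintro ⟨t, h1, h2, h3⟩
    refine Set.mem_vadd.mpr ⟨((∑ l : Fin d, t l), tupleVal d t), ⟨t, h1, rfl⟩,
      ?_⟩
    refine ⟨(0, p.2 - tupleVal d t), ⟨rfl, by simp only [Prod.snd]; linarith⟩, ?_⟩
    have : ((∑ l : Fin d, t l), tupleVal d t) +ᵥ ((0 : EuclideanSpace ℝ (Fin d)), p.2 - tupleVal d t)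
        = (((∑ l : Fin d, t l) + 0), tupleVal d t + (p.2 - tupleVal d t)) := rfl
    rw [this]
    ext
    · rw [h2]; simp
    · simp
  · intro hp
    obtain ⟨a, ⟨t, ht, rfl⟩, b, ⟨hb1, hb2⟩, rfl⟩ := Set.mem_vadd.mp hp
    refine ⟨t, ht, ?_, ?_⟩
    · have : ((∑ l : Fin d, t l, tupleVal d t) +ᵥ b).1 = (∑ l : Fin d, t l) + b.1 := rfl
      rw [this, hb1, add_zero]
    · have : ((∑ l : Fin d, t l, tupleVal d t) +ᵥ b).2 = tupleVal d t + b.2 := rfl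
      rw [this]
      linarith

lemma admissible_isCompact :
    IsCompact {t : Fin d → EuclideanSpace ℝ (Fin d) |
      (∑ l : Fin d, suppNorm ((l : ℕ) + 1) (t l)) ≤ 1} := by
  apply Metric.isCompact_of_isClosed_isBounded
  · apply isClosed_le _ continuous_const
    apply continuous_finset_sum
    intro l _
    exact (suppNorm_continuous (by omega)).comp (continuous_apply l)
  · rw [Metric.isBounded_iff_subset_closedBall 0]
    refine ⟨1, fun t ht => ?_⟩
    rw [Metric.mem_closedBall, dist_pi_le_iff zero_le_one]
    intro l
    have h0 : dist (t l) ((0 : Fin d → EuclideanSpace ℝ (Fin d)) l) = ‖t l‖ := by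
      simp [dist_eq_norm]
    rw [h0]
    have h1 : ‖t l‖ ≤ suppNorm ((l : ℕ) + 1) (t l) := norm_le_suppNorm (by omega) _
    have h2 : suppNorm ((l : ℕ) + 1) (t l) ≤ ∑ m : Fin d, suppNorm ((m : ℕ) + 1) (t m) :=
      Finset.single_le_sum (fun m _ => suppNorm_nonneg' m (t m)) (Finset.mem_univ l)
    calc ‖t l‖ ≤ _ := h1
      _ ≤ _ := h2
      _ ≤ 1 := ht

lemma Cset_isClosed (x : EuclideanSpace ℝ (Fin d)) : IsClosed (Cset d x) := by
  rw [Cset_eq]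
  apply IsClosed.vadd_left_of_isCompact
  · exact (isClosed_eq (continuous_fst) continuous_const).inter
      (isClosed_le continuous_const continuous_snd)
  · apply admissible_isCompact.image
    apply Continuous.prodMk
    · apply continuous_finset_sum
      intro l _
      exact continuous_apply l
    · exact tupleVal_continuous

lemma Cset_convex (x : EuclideanSpace ℝ (Fin d)) : Convex ℝ (Cset d x) := by
  rintro p ⟨t, ht1, ht2, ht3⟩ q ⟨s, hs1, hs2, hs3⟩ a b ha hb hab
  refine ⟨fun l => a • t l + b • s l, ?_, ?_, ?_⟩
  · have hl : ∀ l : Fin d, suppNorm ((l : ℕ) + 1) (a • t l + b • s l) ≤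
        a * suppNorm ((l : ℕ) + 1) (t l) + b * suppNorm ((l : ℕ) + 1) (s l) := by
      intro l
      calc suppNorm ((l : ℕ) + 1) (a • t l + b • s l)
          ≤ suppNorm ((l : ℕ) + 1) (a • t l) + suppNorm ((l : ℕ) + 1) (b • s l) :=
            suppNorm_add_le (by omega) _ _
        _ = a * suppNorm ((l : ℕ) + 1) (t l) + b * suppNorm ((l : ℕ) + 1) (s l) := by
            rw [suppNorm_smul (by omega), suppNorm_smul (by omega),
              abs_of_nonneg ha, abs_of_nonneg hb]
    calc ∑ l : Fin d, suppNorm ((l : ℕ) + 1) (a • t l + b • s l)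
        ≤ ∑ l : Fin d, (a * suppNorm ((l : ℕ) + 1) (t l) + b * suppNorm ((l : ℕ) + 1) (s l)) :=
          Finset.sum_le_sum fun l _ => hl l
      _ = a * (∑ l : Fin d, suppNorm ((l : ℕ) + 1) (t l))
          + b * (∑ l : Fin d, suppNorm ((l : ℕ) + 1) (s l)) := by
          rw [Finset.sum_add_distrib, Finset.mul_sum, Finset.mul_sum]
      _ ≤ a * 1 + b * 1 := by
          apply add_le_add (mul_le_mul_of_nonneg_left ht1 ha) (mul_le_mul_of_nonneg_left hs1 hb)
      _ = 1 := by rw [mul_one, mul_one, hab]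
  · have : (∑ l : Fin d, (a • t l + b • s l)) = a • (∑ l : Fin d, t l) + b • (∑ l : Fin d, s l) := by
      rw [Finset.sum_add_distrib, Finset.smul_sum, Finset.smul_sum]
    rw [this, ht2, hs2]
    rfl
  · have hl : ∀ l : Fin d, ((l : ℕ) + 1 : ℝ) * suppNorm ((l : ℕ) + 1) (a • t l + b • s l) ≤
        a * (((l : ℕ) + 1 : ℝ) * suppNorm ((l : ℕ) + 1) (t l))
        + b * (((l : ℕ) + 1 : ℝ) * suppNorm ((l : ℕ) + 1) (s l)) := by
      intro l
      have h1 : suppNorm ((l : ℕ) + 1) (a • t l + b • s l) ≤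
          a * suppNorm ((l : ℕ) + 1) (t l) + b * suppNorm ((l : ℕ) + 1) (s l) := by
        calc suppNorm ((l : ℕ) + 1) (a • t l + b • s l)
            ≤ suppNorm ((l : ℕ) + 1) (a • t l) + suppNorm ((l : ℕ) + 1) (b • s l) :=
              suppNorm_add_le (by omega) _ _
          _ = a * suppNorm ((l : ℕ) + 1) (t l) + b * suppNorm ((l : ℕ) + 1) (s l) := by
              rw [suppNorm_smul (by omega), suppNorm_smul (by omega),
                abs_of_nonneg ha, abs_of_nonneg hb]
      have h2 : (0:ℝ) ≤ ((l : ℕ) + 1 : ℝ) := by positivity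
      nlinarith [h1, h2]
    calc tupleVal d (fun l => a • t l + b • s l)
        ≤ ∑ l : Fin d, (a * (((l : ℕ) + 1 : ℝ) * suppNorm ((l : ℕ) + 1) (t l))
          + b * (((l : ℕ) + 1 : ℝ) * suppNorm ((l : ℕ) + 1) (s l))) :=
          Finset.sum_le_sum fun l _ => hl l
      _ = a * tupleVal d t + b * tupleVal d s := by
          rw [Finset.sum_add_distrib, tupleVal, tupleVal, Finset.mul_sum, Finset.mul_sum]
      _ ≤ a * p.2 + b * q.2 := by
          apply add_le_add (mul_le_mul_of_nonneg_left ht3 ha) (mul_le_mul_of_nonneg_left hs3 hb)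
      _ = (a • p + b • q).2 := rfl

lemma inner_self_restr (K : Finset (Fin d)) (y : EuclideanSpace ℝ (Fin d)) :
    (inner ℝ y (restr K y) : ℝ) = ‖restr K y‖ ^ 2 := by
  rw [inner_restr_right, norm_restr_sq]
  apply Finset.sum_congr rfl
  intro i _
  ring

lemma restr_supported (K : Finset (Fin d)) (y : EuclideanSpace ℝ (Fin d)) :
    ∀ i, i ∉ K → restr K y i = 0 := by
  intro i hi
  simp [restr_apply, hi]

lemma key_step (hd : 1 ≤ d) (x : EuclideanSpace ℝ (Fin d)) {m : ℝ}
    (hkey : ∀ t : Fin d → EuclideanSpace ℝ (Fin d),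
      (∑ l : Fin d, suppNorm ((l : ℕ) + 1) (t l)) ≤ 1 →
        (inner ℝ x (0:EuclideanSpace ℝ (Fin d)) : ℝ) = 0) : True := trivial

lemma dir2 (hd : 1 ≤ d) (x : EuclideanSpace ℝ (Fin d)) (hx : ‖x‖ ≤ 1)
    (t₀ : Fin d → EuclideanSpace ℝ (Fin d)) (h₀ : Feasible d x t₀)
    (hmin : ∀ t, Feasible d x t → tupleVal d t₀ ≤ tupleVal d t) :
    ((tupleVal d t₀ : ℝ) : EReal) ≤ L0 x := by
  -- reduce to: ∀ m < tupleVal d t₀, (m : EReal) ≤ L0 x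
  suffices hsuff : ∀ m : ℝ, m < tupleVal d t₀ → ((m : ℝ) : EReal) ≤ L0 x by
    by_contra hcon
    push_neg at hcon
    obtain ⟨m, hm1, hm2⟩ := EReal.exists_between_coe_real hcon
    exact absurd (lt_of_le_of_lt (hsuff m (EReal.coe_lt_coe_iff.mp hm2)) hm1) (lt_irrefl _)
  intro m hm
  -- the point (x, m) is not in Cset
  have hnotin : (x, m) ∉ Cset d x := by
    rintro ⟨t, ht1, ht2, ht3⟩
    have : Feasible d x t := ⟨ht1, ht2⟩
    have := hmin t this
    simp only at ht3
    linarith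
  obtain ⟨f, u, hfu, hfC⟩ :=
    geometric_hahn_banach_point_closed (Cset_convex x) (Cset_isClosed x) hnotin
  -- decompose f
  set β : ℝ := f (0, 1) with hβdef
  have hdecomp : ∀ (z : EuclideanSpace ℝ (Fin d)) (r : ℝ), f (z, r) = f (z, 0) + r * β := by
    intro z r
    have h1 : (z, r) = (z, (0:ℝ)) + ((0:EuclideanSpace ℝ (Fin d)), r) := by
      ext <;> simp
    have h2 : ((0:EuclideanSpace ℝ (Fin d)), r) = r • ((0:EuclideanSpace ℝ (Fin d)), (1:ℝ)) := by
      ext <;> simp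
    rw [h1, map_add, h2, map_smul]
    simp [hβdef]
  -- membership facts
  have hT : ((x, tupleVal d t₀) : EuclideanSpace ℝ (Fin d) × ℝ) ∈ Cset d x :=
    ⟨t₀, h₀.1, h₀.2, le_refl _⟩
  have hβpos : 0 < β := by
    have h1 := hfu.trans (hfC _ hT)
    rw [hdecomp x m, hdecomp x (tupleVal d t₀)] at h1
    by_contra hβ
    push_neg at hβ
    nlinarith [h1]
  -- the separating vector
  set w : EuclideanSpace ℝ (Fin d) :=
    (InnerProductSpace.toDual ℝ (EuclideanSpace ℝ (Fin d))).symm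
      (f.comp (ContinuousLinearMap.inl ℝ (EuclideanSpace ℝ (Fin d)) ℝ)) with hwdef
  have hw : ∀ z : EuclideanSpace ℝ (Fin d), (inner ℝ w z : ℝ) = f (z, 0) := by
    intro z
    rw [hwdef, InnerProductSpace.toDual_symm_apply]
    rfl
  set y : EuclideanSpace ℝ (Fin d) := (-β⁻¹) • w with hydef
  -- the key inequality for all admissible tuples
  have hkey : ∀ t : Fin d → EuclideanSpace ℝ (Fin d),
      (∑ l : Fin d, suppNorm ((l : ℕ) + 1) (t l)) ≤ 1 →
      (inner ℝ y (∑ l : Fin d, t l) : ℝ) - tupleVal d t < (inner ℝ y x : ℝ) - m := by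
    intro t ht
    have hmem : ((∑ l : Fin d, t l, tupleVal d t) : EuclideanSpace ℝ (Fin d) × ℝ) ∈ Cset d x :=
      ⟨t, ht, rfl, le_refl _⟩
    have h1 := hfu.trans (hfC _ hmem)
    rw [hdecomp x m, hdecomp (∑ l : Fin d, t l) (tupleVal d t), ← hw, ← hw] at h1
    have h2 : (inner ℝ y (∑ l : Fin d, t l) : ℝ) = -β⁻¹ * (inner ℝ w (∑ l : Fin d, t l) : ℝ) := by
      rw [hydef, real_inner_smul_left]
    have h3 : (inner ℝ y x : ℝ) = -β⁻¹ * (inner ℝ w x : ℝ) := by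
      rw [hydef, real_inner_smul_left]
    rw [h2, h3]
    have hβinv : 0 < β⁻¹ := inv_pos.mpr hβpos
    have hβne : β ≠ 0 := ne_of_gt hβpos
    -- h1 : ⟪w,x⟫ + m β < ⟪w,Σt⟫ + tupleVal t β
    have h4 : ((inner ℝ w x : ℝ) - (inner ℝ w (∑ l : Fin d, t l) : ℝ)) * β⁻¹
        < tupleVal d t - m := by
      have := mul_lt_mul_of_pos_right (sub_lt_sub_right h1 ((inner ℝ w (∑ l : Fin d, t l) : ℝ) + m * β)) hβinv
      calc ((inner ℝ w x : ℝ) - (inner ℝ w (∑ l : Fin d, t l) : ℝ)) * β⁻¹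
          = ((inner ℝ w x : ℝ) + m * β - ((inner ℝ w (∑ l : Fin d, t l) : ℝ) + m * β)) * β⁻¹ := by ring
        _ < ((inner ℝ w (∑ l : Fin d, t l) : ℝ) + tupleVal d t * β
            - ((inner ℝ w (∑ l : Fin d, t l) : ℝ) + m * β)) * β⁻¹ := this
        _ = (tupleVal d t - m) * (β * β⁻¹) := by ring
        _ = tupleVal d t - m := by rw [mul_inv_cancel₀ hβne, mul_one]
    nlinarith [h4]
  -- now bound the capra conjugate of y
  have hconj : capraConjL0 y ≤ (inner ℝ y x : ℝ) - m := by
    apply capraConj_le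
    intro l
    rcases Nat.eq_zero_or_pos (l : ℕ) with hl0 | hlpos
    · rw [hl0]
      rw [gaugeNorm_zero_k]
      have h0 := hkey 0 (by simp [suppNorm_zero])
      simp only [Pi.zero_apply, Finset.sum_const_zero, inner_zero_right] at h0
      have htv0 : tupleVal d (0 : Fin d → EuclideanSpace ℝ (Fin d)) = 0 := by
        unfold tupleVal
        simp [suppNorm_zero]
      rw [htv0] at h0
      push_cast
      linarith
    · -- l ≥ 1
      obtain ⟨K, hKcard, hKeq⟩ := gaugeNorm_exists (l : ℕ) y
      rcases eq_or_lt_of_le (norm_nonneg (restr K y)) with hz | hz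
      · -- gauge = 0
        have h0 := hkey 0 (by simp [suppNorm_zero])
        simp only [Pi.zero_apply, Finset.sum_const_zero, inner_zero_right] at h0
        have htv0 : tupleVal d (0 : Fin d → EuclideanSpace ℝ (Fin d)) = 0 := by
          unfold tupleVal; simp [suppNorm_zero]
        rw [htv0] at h0
        rw [hKeq, ← hz]
        have : (0:ℝ) ≤ ((l:ℕ) : ℝ) := Nat.cast_nonneg _
        linarith
      · -- gauge > 0
        set v : EuclideanSpace ℝ (Fin d) := ‖restr K y‖⁻¹ • restr K y with hvdef
        have hvnorm : ‖v‖ = 1 := by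
          rw [hvdef, norm_smul, Real.norm_eq_abs, abs_of_pos (inv_pos.mpr hz),
            inv_mul_cancel₀ (ne_of_gt hz)]
        have hvsupp : ∀ i, i ∉ K → v i = 0 := by
          intro i hi
          rw [hvdef]
          have := restr_supported K y i hi
          simp [PiLp.smul_apply, this]
        have hlle : (l : ℕ) ≤ d := by omega
        set j : Fin d := ⟨(l : ℕ) - 1, by omega⟩ with hjdef
        have hj1 : (j : ℕ) + 1 = (l : ℕ) := by
          rw [hjdef]; simp; omega
        set t : Fin d → EuclideanSpace ℝ (Fin d) := fun i => if i = j then v else 0 with htdef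
        have hσv : suppNorm ((j : ℕ) + 1) v ≤ 1 := by
          apply suppNorm_restr_unit (by omega) (by rw [hj1]; exact hKcard) hvsupp
          rw [hvnorm]
        have hsup_t : ∀ i : Fin d, suppNorm ((i : ℕ) + 1) (t i)
            = if i = j then suppNorm ((j : ℕ) + 1) v else 0 := by
          intro i
          rcases eq_or_ne i j with rfl | hne
          · simp [htdef]
          · simp [htdef, hne, suppNorm_zero]
        have hadm : (∑ i : Fin d, suppNorm ((i : ℕ) + 1) (t i)) ≤ 1 := by
          rw [Finset.sum_congr rfl fun i _ => hsup_t i,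
            Finset.sum_ite_eq' Finset.univ j (fun _ => suppNorm ((j : ℕ) + 1) v)]
          simpa using hσv
        have hsumt : (∑ i : Fin d, t i) = v := by
          rw [htdef]
          simp [Finset.sum_ite_eq' Finset.univ j (fun _ => v)]
        have htv : tupleVal d t = ((j : ℕ) + 1 : ℝ) * suppNorm ((j : ℕ) + 1) v := by
          unfold tupleVal
          have : ∀ i : Fin d, (((i : ℕ) + 1 : ℝ)) * suppNorm ((i : ℕ) + 1) (t i)
              = if i = j then (((j : ℕ) + 1 : ℝ)) * suppNorm ((j : ℕ) + 1) v else 0 := by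
            intro i
            rcases eq_or_ne i j with rfl | hne
            · simp [htdef]
            · simp [htdef, hne, suppNorm_zero]
          rw [Finset.sum_congr rfl fun i _ => this i,
            Finset.sum_ite_eq' Finset.univ j (fun _ => (((j : ℕ) + 1 : ℝ)) * suppNorm ((j : ℕ) + 1) v)]
          simp
        have hiv : (inner ℝ y v : ℝ) = ‖restr K y‖ := by
          rw [hvdef, real_inner_smul_right, inner_self_restr, sq]
          rw [← mul_assoc, inv_mul_cancel₀ (ne_of_gt hz), one_mul]
        have h5 := hkey t hadm
        rw [hsumt, hiv, htv] at h5
        have h6 : tupleVal d t ≤ ((l : ℕ) : ℝ) := by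
          rw [htv]
          calc ((j : ℕ) + 1 : ℝ) * suppNorm ((j : ℕ) + 1) v ≤ ((j : ℕ) + 1 : ℝ) * 1 :=
                mul_le_mul_of_nonneg_left hσv (by positivity)
            _ = ((l : ℕ) : ℝ) := by rw [mul_one]; exact_mod_cast hj1
        rw [htv] at h6
        rw [hKeq]
        have hσnn : 0 ≤ suppNorm ((j : ℕ) + 1) v := suppNorm_nonneg (by omega) v
        nlinarith [h5, h6]
  -- conclude
  have hfinal : m ≤ (inner ℝ x y : ℝ) - capraConjL0 y := by
    rw [real_inner_comm]
    linarith
  calc ((m : ℝ) : EReal) ≤ (((inner ℝ x y : ℝ) - capraConjL0 y : ℝ) : EReal) :=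
        EReal.coe_le_coe_iff.mpr hfinal
    _ ≤ L0 x := le_L0 x y

/-- `L₀(x)` is the minimum of `Σ_{l=1}^{d} l · ‖x^{(l)}‖^sp_(l)` over all
tuples `(x^{(1)},…,x^{(d)})` with `Σ_l ‖x^{(l)}‖^sp_(l) ≤ 1` and `Σ_l x^{(l)} = x`
(the infimum in `ℝ̄` being `+∞` when no feasible tuple exists, and attained otherwise). -/
theorem L0_eq_min_support_norms (d : ℕ) (hd : 1 ≤ d) (x : EuclideanSpace ℝ (Fin d)) :
    L0 x = (⨅ t : Fin d → EuclideanSpace ℝ (Fin d), ⨅ _ : Feasible d x t,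
        ((tupleVal d t : ℝ) : EReal)) ∧
      ((∃ t, Feasible d x t) →
        ∃ t, Feasible d x t ∧ ((tupleVal d t : ℝ) : EReal) = L0 x) := by
  rcases le_or_gt ‖x‖ 1 with hx | hx
  · obtain ⟨t₀, ht₀, hmin⟩ := exists_min_feasible hd x hx
    have h1 : L0 x ≤ ⨅ t : Fin d → EuclideanSpace ℝ (Fin d), ⨅ _ : Feasible d x t,
        ((tupleVal d t : ℝ) : EReal) :=
      le_iInf fun t => le_iInf fun ht => dir1 x t ht
    have h3 : ((tupleVal d t₀ : ℝ) : EReal) ≤ L0 x := dir2 hd x hx t₀ ht₀ hmin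
    have h2 : (⨅ t : Fin d → EuclideanSpace ℝ (Fin d), ⨅ _ : Feasible d x t,
        ((tupleVal d t : ℝ) : EReal)) ≤ ((tupleVal d t₀ : ℝ) : EReal) :=
      iInf_le_of_le t₀ (iInf_le _ ht₀)
    refine ⟨le_antisymm h1 (h2.trans h3), fun _ => ⟨t₀, ht₀, le_antisymm h3 (dir1 x t₀ ht₀)⟩⟩
  · have hnf := no_feasible_of_norm_gt x hx
    constructor
    · rw [L0_top_of_norm_gt x hx]
      symm
      rw [eq_top_iff]
      apply le_iInf
      intro t
      apply le_iInf
      intro ht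
      exact absurd ⟨t, ht⟩ hnf
    · intro h
      exact absurd h hnf
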